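/- There exists a value representation for quantum systems described by the two-dimensional complex Hilbert space. That is, there exist a probability space Λ and a family V assigning to each pure state |ψ⟩ and each λ ∈ Λ a valuation V_ψ^λ on all Hermitian operators of ℂ² (assigning to each Hermitian A one of its eigenvalues, compatibly with joint spectra of commuting operators), such that for every pure state ψ and every Hermitian operator A, ∫_Λ V_ψ^λ(A) dλ = ⟨ψ|A|ψ⟩. -/

import Mathlib

open Matrix MeasureTheory

/-- A valuation on all Hermitian operators of ℂ²: each Hermitian `A` gets one of its
eigenvalues, and commuting Hermitian operators get joint eigenvalues (realized by a
common nonzero eigenvector). -/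
def IsQubitValuation (v : Matrix (Fin 2) (Fin 2) ℂ → ℝ) : Prop :=
  (∀ A : Matrix (Fin 2) (Fin 2) ℂ, A.IsHermitian → (v A : ℂ) ∈ spectrum ℂ A) ∧
  (∀ A B : Matrix (Fin 2) (Fin 2) ℂ, A.IsHermitian → B.IsHermitian → A * B = B * A →
    ∃ φ : Fin 2 → ℂ, φ ≠ 0 ∧ A *ᵥ φ = (v A : ℂ) • φ ∧ B *ᵥ φ = (v B : ℂ) • φ)

noncomputable section

open Complex

namespace Bell

def tc (A : Matrix (Fin 2) (Fin 2) ℂ) : ℝ := ((A 0 0).re + (A 1 1).re) / 2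
def uc (A : Matrix (Fin 2) (Fin 2) ℂ) : ℝ := ((A 0 0).re - (A 1 1).re) / 2
def cc (A : Matrix (Fin 2) (Fin 2) ℂ) : ℂ := A 0 1
def rr (A : Matrix (Fin 2) (Fin 2) ℂ) : ℝ := Real.sqrt ((uc A)^2 + normSq (cc A))

lemma rr_nonneg (A : Matrix (Fin 2) (Fin 2) ℂ) : 0 ≤ rr A := Real.sqrt_nonneg _
lemma rr_sq (A : Matrix (Fin 2) (Fin 2) ℂ) : rr A ^ 2 = uc A ^ 2 + normSq (cc A) :=
  Real.sq_sqrt (add_nonneg (sq_nonneg _) (normSq_nonneg _))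
lemma rr_eq_zero {A : Matrix (Fin 2) (Fin 2) ℂ} (h : rr A = 0) : uc A = 0 ∧ cc A = 0 := by
  have h2 := rr_sq A
  rw [h] at h2
  have hn := normSq_nonneg (cc A)
  have hu : uc A = 0 := by nlinarith [sq_nonneg (uc A)]
  have hc : normSq (cc A) = 0 := by nlinarith [sq_nonneg (uc A)]
  exact ⟨hu, normSq_eq_zero.mp hc⟩

def Mm (u : ℝ) (c : ℂ) : Matrix (Fin 2) (Fin 2) ℂ :=
  !![(u:ℂ), c; (starRingEnd ℂ) c, (-u:ℂ)]

lemma herm_decomp {A : Matrix (Fin 2) (Fin 2) ℂ} (hA : A.IsHermitian) :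
    A = (tc A : ℂ) • (1 : Matrix (Fin 2) (Fin 2) ℂ) + Mm (uc A) (cc A) := by
  have h00 := hA.apply 0 0
  have h11 := hA.apply 1 1
  have h10 := hA.apply 1 0
  have h00im : (A 0 0).im = 0 := by
    have := congrArg Complex.im h00
    simp at this; linarith
  have h11im : (A 1 1).im = 0 := by
    have := congrArg Complex.im h11
    simp at this; linarith
  ext i j
  fin_cases i <;> fin_cases j
  · show A 0 0 = _
    simp [Mm, tc, uc, Matrix.one_apply]
    apply Complex.ext <;> simp [h00im]; ring
  · show A 0 1 = _
    simp [Mm, cc, Matrix.one_apply]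
  · show A 1 0 = _
    simp [Mm, cc, Matrix.one_apply]
    exact h10.symm
  · show A 1 1 = _
    simp [Mm, tc, uc, Matrix.one_apply]
    apply Complex.ext <;> simp [h11im]; ring

def ev (A : Matrix (Fin 2) (Fin 2) ℂ) (σ : ℝ) : Fin 2 → ℂ :=
  if cc A = 0 then (if σ * rr A = uc A then ![1, 0] else ![0, 1])
  else ![cc A, ((σ * rr A - uc A : ℝ) : ℂ)]

lemma ev_ne_zero (A : Matrix (Fin 2) (Fin 2) ℂ) (σ : ℝ) : ev A σ ≠ 0 := by
  unfold ev
  split_ifs with h1 h2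
  · intro h; have := congrFun h 0; simp at this
  · intro h; have := congrFun h 1; simp at this
  · intro h; have := congrFun h 0; simp at this; exact h1 this

lemma Mm_mulVec_ev (A : Matrix (Fin 2) (Fin 2) ℂ) (σ : ℝ) (hσ : σ = 1 ∨ σ = -1) :
    Mm (uc A) (cc A) *ᵥ ev A σ = ((σ * rr A : ℝ) : ℂ) • ev A σ := by
  have hσ2 : σ ^ 2 = 1 := by rcases hσ with h | h <;> rw [h] <;> norm_num
  unfold ev
  split_ifs with h1 h2
  · -- c = 0, σ r = u
    funext i
    fin_cases i <;> simp [Mm, Matrix.mulVec, dotProduct, Fin.sum_univ_two, h1, h2]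
  · -- c = 0, σ r ≠ u : σ r = -u
    have hr2 : rr A ^ 2 = uc A ^ 2 := by rw [rr_sq, h1]; simp
    have hsq : (σ * rr A) ^ 2 = uc A ^ 2 := by rw [mul_pow, hσ2, one_mul, hr2]
    have hneg : σ * rr A = -uc A := by
      have : (σ * rr A - uc A) * (σ * rr A + uc A) = 0 := by ring_nf; nlinarith [hsq]
      rcases mul_eq_zero.mp this with h | h
      · exact absurd (by linarith) h2
      · linarith
    funext i
    fin_cases i <;> simp [Mm, Matrix.mulVec, dotProduct, Fin.sum_univ_two, h1, hneg]
  · -- c ≠ 0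
    funext i
    fin_cases i <;>
      simp [Mm, Matrix.mulVec, dotProduct, Fin.sum_univ_two]
    · ring
    · have hcc : (starRingEnd ℂ) (cc A) * cc A = (normSq (cc A) : ℂ) := by
        rw [mul_comm, mul_conj]
      rw [hcc]
      have : normSq (cc A) = (σ * rr A) ^ 2 - uc A ^ 2 := by
        have := rr_sq A
        nlinarith [hσ2]
      rw [this]
      push_cast; ring


lemma Mm_smul (τ : ℝ) (u : ℝ) (c : ℂ) : Mm (τ * u) ((τ : ℂ) * c) = (τ : ℂ) • Mm u c := by
  unfold Mm
  ext i j
  fin_cases i <;> fin_cases j <;> simp [mul_comm]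

lemma mulVec_ev_par {A B : Matrix (Fin 2) (Fin 2) ℂ} (hB : B.IsHermitian) (τ : ℝ)
    (hu : uc B = τ * uc A) (hc : cc B = (τ : ℂ) * cc A) (σ : ℝ) (hσ : σ = 1 ∨ σ = -1) :
    B *ᵥ ev A σ = ((tc B + τ * (σ * rr A) : ℝ) : ℂ) • ev A σ := by
  have hd := herm_decomp hB
  conv_lhs => rw [hd, hu, hc, Mm_smul]
  rw [Matrix.add_mulVec, Matrix.smul_mulVec, Matrix.one_mulVec,
    Matrix.smul_mulVec, Mm_mulVec_ev A σ hσ, smul_smul, ← add_smul]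
  congr 1
  push_cast; ring

lemma mulVec_ev_self {A : Matrix (Fin 2) (Fin 2) ℂ} (hA : A.IsHermitian) (σ : ℝ)
    (hσ : σ = 1 ∨ σ = -1) :
    A *ᵥ ev A σ = ((tc A + σ * rr A : ℝ) : ℂ) • ev A σ := by
  have := mulVec_ev_par (A := A) hA 1 (by ring) (by push_cast; ring) σ hσ
  simpa using this

lemma comm_parallel {A B : Matrix (Fin 2) (Fin 2) ℂ} (hA : A.IsHermitian) (hB : B.IsHermitian)
    (hAB : A * B = B * A) :
    (∃ τ : ℝ, uc B = τ * uc A ∧ cc B = (τ : ℂ) * cc A) ∨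
    (∃ τ : ℝ, uc A = τ * uc B ∧ cc A = (τ : ℂ) * cc B) := by
  -- reduce to the traceless parts
  have hM : Mm (uc A) (cc A) * Mm (uc B) (cc B) = Mm (uc B) (cc B) * Mm (uc A) (cc A) := by
    have hd : ((tc A : ℂ) • 1 + Mm (uc A) (cc A)) * ((tc B : ℂ) • 1 + Mm (uc B) (cc B))
        = ((tc B : ℂ) • 1 + Mm (uc B) (cc B)) * ((tc A : ℂ) • 1 + Mm (uc A) (cc A)) := by
      rw [← herm_decomp hA, ← herm_decomp hB, hAB]
    simp only [add_mul, mul_add, Matrix.smul_mul, Matrix.mul_smul, Matrix.one_mul,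
      Matrix.mul_one, smul_smul, mul_comm (tc A : ℂ)] at hd
    have := hd
    -- cancel the common terms
    abel_nf at this
    linear_combination (norm := abel) this
  -- entrywise equations
  have h01 := congrFun (congrFun hM 0) 1
  have h00 := congrFun (congrFun hM 0) 0
  simp [Mm, Matrix.mul_apply, Fin.sum_univ_two] at h01 h00
  -- h01 : u_A c_B - u_B c_A = u_B c_A - u_A c_B  (roughly)
  by_cases hu : uc A = 0
  · by_cases hcz : cc A = 0
    · right
      exact ⟨0, by simp [hu, hcz]⟩
    · left
      have huB : (uc B : ℂ) * cc A = 0 := by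
        rw [hu] at h01
        push_cast at h01
        linear_combination -h01 / 2
      have huB0 : uc B = 0 := by
        rcases mul_eq_zero.mp huB with h | h
        · exact_mod_cast h
        · exact absurd h hcz
      have hreal : cc B * (starRingEnd ℂ) (cc A) = cc A * (starRingEnd ℂ) (cc B) := by
        linear_combination -h00
      set τ : ℝ := (cc B * (starRingEnd ℂ) (cc A)).re / normSq (cc A) with hτ
      refine ⟨τ, by rw [huB0, hu]; ring, ?_⟩
      have hself : cc B * (starRingEnd ℂ) (cc A) = ((cc B * (starRingEnd ℂ) (cc A)).re : ℂ) := by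
        have him := congrArg Complex.im hreal
        simp [Complex.mul_im] at him
        apply Complex.ext
        · simp
        · simp [Complex.mul_im]
          linarith
      have hns : (normSq (cc A) : ℂ) ≠ 0 := by
        exact_mod_cast fun h => hcz (normSq_eq_zero.mp (by exact_mod_cast h))
      have key : cc B * ((normSq (cc A) : ℂ)) = ((cc B * (starRingEnd ℂ) (cc A)).re : ℂ) * cc A := by
        rw [← hself]
        rw [← mul_conj (cc A)]
        ring
      rw [hτ]
      push_cast
      field_simp at key ⊢
      linear_combination key
  · left
    refine ⟨uc B / uc A, by field_simp, ?_⟩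
    have h01' : (uc A : ℂ) * cc B = (uc B : ℂ) * cc A := by
      linear_combination h01 / 2
    have huA : (uc A : ℂ) ≠ 0 := by exact_mod_cast hu
    push_cast
    field_simp
    linear_combination h01'


def pB (ψ : Fin 2 → ℂ) : ℝ := normSq (ψ 0) - normSq (ψ 1)
def qB (ψ : Fin 2 → ℂ) : ℂ := (starRingEnd ℂ) (ψ 0) * ψ 1
def bloch (ψ : Fin 2 → ℂ) (m : ℝ × ℂ) : ℝ := pB ψ * m.1 + 2 * (m.2 * qB ψ).re
def eps (m : ℝ × ℂ) : ℝ :=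
  if 0 < m.1 then 1 else if m.1 < 0 then -1
  else if 0 < m.2.re then 1 else if m.2.re < 0 then -1
  else if 0 < m.2.im then 1 else -1
def sg (ψ : Fin 2 → ℂ) (m : ℝ × ℂ) (lam : ℝ) : ℝ :=
  if |lam| < |bloch ψ m| / 2 then (if 0 < bloch ψ m then 1 else -1)
  else (if 0 ≤ lam then 1 else -1) * eps m
def dirA (A : Matrix (Fin 2) (Fin 2) ℂ) : ℝ × ℂ := (uc A / rr A, cc A / rr A)
def Val (ψ : Fin 2 → ℂ) (lam : ℝ) (A : Matrix (Fin 2) (Fin 2) ℂ) : ℝ :=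
  tc A + rr A * sg ψ (dirA A) lam

lemma eps_pm (m : ℝ × ℂ) : eps m = 1 ∨ eps m = -1 := by
  unfold eps; split_ifs <;> simp

lemma sg_pm (ψ : Fin 2 → ℂ) (m : ℝ × ℂ) (lam : ℝ) : sg ψ m lam = 1 ∨ sg ψ m lam = -1 := by
  unfold sg
  split_ifs <;> rcases eps_pm m with h | h <;> simp [h]

lemma bloch_neg (ψ : Fin 2 → ℂ) (m : ℝ × ℂ) : bloch ψ (-m.1, -m.2) = - bloch ψ m := by
  unfold bloch
  simp [neg_mul]
  ring

lemma eps_odd {m : ℝ × ℂ} (hm : m ≠ 0) : eps (-m.1, -m.2) = - eps m := by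
  have hm' : m.1 ≠ 0 ∨ m.2 ≠ 0 := by
    by_contra h
    push_neg at h
    exact hm (Prod.ext h.1 h.2)
  show (if 0 < -m.1 then (1:ℝ) else if -m.1 < 0 then -1
    else if 0 < (-m.2).re then 1 else if (-m.2).re < 0 then -1
    else if 0 < (-m.2).im then 1 else -1) = - eps m
  unfold eps
  simp only [Complex.neg_re, Complex.neg_im]
  rcases lt_trichotomy m.1 0 with h1 | h1 | h1
  · rw [if_pos (show (0:ℝ) < -m.1 by linarith), if_neg (show ¬ (0:ℝ) < m.1 by linarith),
      if_pos h1]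
    norm_num
  · have h2 : m.2 ≠ 0 := by
      rcases hm' with h | h
      · exact absurd h1 h
      · exact h
    rw [h1]
    rw [if_neg (lt_irrefl 0), if_neg (lt_irrefl 0), neg_zero, if_neg (lt_irrefl 0)]
    rcases lt_trichotomy m.2.re 0 with hr | hr | hr
    · rw [if_pos (show (0:ℝ) < -m.2.re by linarith), if_neg (show ¬ (0:ℝ) < m.2.re by linarith),
        if_pos hr]
      norm_num
    · have h3 : m.2.im ≠ 0 := fun h4 => h2 (Complex.ext hr h4)
      rw [hr, neg_zero, if_neg (lt_irrefl 0), if_neg (lt_irrefl 0), if_neg (lt_irrefl 0),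
        if_neg (lt_irrefl 0)]
      rcases lt_trichotomy m.2.im 0 with hi | hi | hi
      · rw [if_pos (show (0:ℝ) < -m.2.im by linarith), if_neg (show ¬ (0:ℝ) < m.2.im by linarith)]
        norm_num
      · exact absurd hi h3
      · rw [if_neg (show ¬ (0:ℝ) < -m.2.im by linarith), if_pos hi]
        norm_num
    · rw [if_neg (show ¬ (0:ℝ) < -m.2.re by linarith), if_pos (show -m.2.re < (0:ℝ) by linarith),
        if_pos hr]
      norm_num
  · rw [if_neg (show ¬ (0:ℝ) < -m.1 by linarith), if_pos (show -m.1 < (0:ℝ) by linarith),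
      if_pos h1]

lemma sg_odd (ψ : Fin 2 → ℂ) {m : ℝ × ℂ} (hm : m ≠ 0) (lam : ℝ) :
    sg ψ (-m.1, -m.2) lam = - sg ψ m lam := by
  unfold sg
  rw [bloch_neg, abs_neg]
  by_cases h1 : |lam| < |bloch ψ m| / 2
  · rw [if_pos h1, if_pos h1]
    have hb : bloch ψ m ≠ 0 := by
      intro h
      rw [h] at h1
      simp at h1
      exact absurd h1 (not_lt.mpr (abs_nonneg lam))
    rcases lt_or_gt_of_ne hb with h | h
    · rw [if_pos (show (0:ℝ) < -bloch ψ m by linarith), if_neg (show ¬ (0:ℝ) < bloch ψ m by linarith)]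
      norm_num
    · rw [if_neg (show ¬ (0:ℝ) < -bloch ψ m by linarith), if_pos h]
  · rw [if_neg h1, if_neg h1, eps_odd hm]
    ring


lemma rr_par {A B : Matrix (Fin 2) (Fin 2) ℂ} (τ : ℝ)
    (hu : uc A = τ * uc B) (hc : cc A = (τ:ℂ) * cc B) : rr A = |τ| * rr B := by
  unfold rr
  rw [hu, hc, normSq_mul, normSq_ofReal]
  have h1 : (τ * uc B) ^ 2 + τ * τ * normSq (cc B) = τ^2 * (uc B ^ 2 + normSq (cc B)) := by ring
  rw [h1, Real.sqrt_mul (sq_nonneg τ), Real.sqrt_sq_eq_abs]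

lemma dir_ne_zero {A : Matrix (Fin 2) (Fin 2) ℂ} (h : rr A ≠ 0) : dirA A ≠ 0 := by
  intro h0
  have h1 : uc A / rr A = 0 := congrArg Prod.fst h0
  have h2 : cc A / (rr A : ℂ) = 0 := congrArg Prod.snd h0
  have hu : uc A = 0 := by
    rcases div_eq_zero_iff.mp h1 with h' | h'
    · exact h'
    · exact absurd h' h
  have hc : cc A = 0 := by
    rcases div_eq_zero_iff.mp h2 with h' | h'
    · exact h'
    · exact absurd (by exact_mod_cast h' : rr A = 0) h
  apply h
  unfold rr
  rw [hu, hc]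
  simp

lemma rr_sg_par {A B : Matrix (Fin 2) (Fin 2) ℂ} (τ : ℝ)
    (hu : uc A = τ * uc B) (hc : cc A = (τ:ℂ) * cc B) (ψ : Fin 2 → ℂ) (lam : ℝ) :
    rr A * sg ψ (dirA A) lam = τ * sg ψ (dirA B) lam * rr B := by
  by_cases hrB : rr B = 0
  · obtain ⟨hb1, hb2⟩ := rr_eq_zero hrB
    have huA : uc A = 0 := by rw [hu, hb1, mul_zero]
    have hcA : cc A = 0 := by rw [hc, hb2, mul_zero]
    have hrA : rr A = 0 := by unfold rr; rw [huA, hcA]; simp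
    rw [hrA, hrB]; ring
  · have hrBc : ((rr B : ℝ) : ℂ) ≠ 0 := by exact_mod_cast hrB
    rcases lt_trichotomy τ 0 with hτ | hτ | hτ
    · have hτ0 : τ ≠ 0 := ne_of_lt hτ
      have hτ0c : (τ : ℂ) ≠ 0 := by exact_mod_cast hτ0
      have hrA : rr A = -τ * rr B := by rw [rr_par τ hu hc, abs_of_neg hτ]
      have hdir : dirA A = (-(dirA B).1, -(dirA B).2) := by
        unfold dirA
        apply Prod.ext
        · show uc A / rr A = -(uc B / rr B)
          rw [hu, hrA]
          field_simp
        · show cc A / (rr A : ℂ) = -(cc B / (rr B : ℂ))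
          rw [hc, hrA]
          push_cast
          field_simp
      rw [hdir, sg_odd ψ (dir_ne_zero hrB) lam, hrA]
      ring
    · have hrA : rr A = 0 := by rw [rr_par τ hu hc, hτ]; simp
      rw [hrA, hτ]; ring
    · have hτ0 : τ ≠ 0 := ne_of_gt hτ
      have hτ0c : (τ : ℂ) ≠ 0 := by exact_mod_cast hτ0
      have hrA : rr A = τ * rr B := by rw [rr_par τ hu hc, abs_of_pos hτ]
      have hdir : dirA A = dirA B := by
        unfold dirA
        apply Prod.ext
        · show uc A / rr A = uc B / rr B
          rw [hu, hrA]
          field_simp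
        · show cc A / (rr A : ℂ) = cc B / (rr B : ℂ)
          rw [hc, hrA]
          push_cast
          field_simp
      rw [hdir, hrA]
      ring

lemma pair {A B : Matrix (Fin 2) (Fin 2) ℂ} (hA : A.IsHermitian) (hB : B.IsHermitian) (τ : ℝ)
    (hu : uc A = τ * uc B) (hc : cc A = (τ:ℂ) * cc B) (ψ : Fin 2 → ℂ) (lam : ℝ) :
    ∃ φ : Fin 2 → ℂ, φ ≠ 0 ∧ A *ᵥ φ = ((Val ψ lam A : ℝ) : ℂ) • φ ∧
      B *ᵥ φ = ((Val ψ lam B : ℝ) : ℂ) • φ := by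
  set σ := sg ψ (dirA B) lam with hσdef
  have hσ := sg_pm ψ (dirA B) lam
  refine ⟨ev B σ, ev_ne_zero B σ, ?_, ?_⟩
  · rw [mulVec_ev_par (A := B) (B := A) hA τ hu hc σ hσ]
    congr 2
    unfold Val
    rw [rr_sg_par τ hu hc ψ lam, ← hσdef]
    ring
  · rw [mulVec_ev_par (A := B) (B := B) hB 1 (one_mul _).symm (by rw [ofReal_one, one_mul]) σ hσ]
    congr 2
    unfold Val
    rw [← hσdef]
    ring

lemma mem_spectrum_of_eig {A : Matrix (Fin 2) (Fin 2) ℂ} {μ : ℂ} {φ : Fin 2 → ℂ}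
    (hφ : φ ≠ 0) (h : A *ᵥ φ = μ • φ) : μ ∈ spectrum ℂ A := by
  rw [spectrum.mem_iff]
  intro hUnit
  apply hφ
  set N : Matrix (Fin 2) (Fin 2) ℂ := algebraMap ℂ (Matrix (Fin 2) (Fin 2) ℂ) μ - A with hN
  have h0 : N *ᵥ φ = 0 := by
    rw [hN, Matrix.sub_mulVec, h, Algebra.algebraMap_eq_smul_one, Matrix.smul_mulVec,
      Matrix.one_mulVec, sub_self]
  have hdet : IsUnit N.det := (Matrix.isUnit_iff_isUnit_det N).mp hUnit
  calc φ = (1 : Matrix (Fin 2) (Fin 2) ℂ) *ᵥ φ := (Matrix.one_mulVec φ).symm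
    _ = (N⁻¹ * N) *ᵥ φ := by rw [Matrix.nonsing_inv_mul N hdet]
    _ = N⁻¹ *ᵥ (N *ᵥ φ) := by rw [Matrix.mulVec_mulVec]
    _ = 0 := by rw [h0, Matrix.mulVec_zero]

lemma isValuation (ψ : Fin 2 → ℂ) (lam : ℝ) : IsQubitValuation (Val ψ lam) := by
  constructor
  · intro A hA
    obtain ⟨φ, hφ, hAφ, -⟩ := pair hA hA 1 (one_mul _).symm (by rw [ofReal_one, one_mul]) ψ lam
    exact mem_spectrum_of_eig hφ hAφ
  · intro A B hA hB hAB
    rcases comm_parallel hA hB hAB with ⟨τ, hu, hc⟩ | ⟨τ, hu, hc⟩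
    · obtain ⟨φ, hφ, hBφ, hAφ⟩ := pair hB hA τ hu hc ψ lam
      exact ⟨φ, hφ, hAφ, hBφ⟩
    · exact pair hA hB τ hu hc ψ lam


def ff (b e : ℝ) (lam : ℝ) : ℝ :=
  if |lam| < |b| / 2 then (if 0 < b then 1 else -1) else (if 0 ≤ lam then 1 else -1) * e

lemma sg_eq_ff (ψ : Fin 2 → ℂ) (m : ℝ × ℂ) : sg ψ m = ff (bloch ψ m) (eps m) := rfl

lemma ff_integrableOn (b e : ℝ) (s : Set ℝ) (hs : MeasurableSet s) (hvol : volume s < ⊤) :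
    IntegrableOn (ff b e) s volume := by
  have hmeas : Measurable (ff b e) := by
    unfold ff
    exact Measurable.ite (measurableSet_lt measurable_abs measurable_const)
      measurable_const
      ((Measurable.ite (measurableSet_le measurable_const measurable_id)
        measurable_const measurable_const).mul measurable_const)
  have hconst : IntegrableOn (fun _ => (1 + |e| : ℝ)) s volume :=
    integrableOn_const hvol.ne
  refine Integrable.mono' hconst hmeas.aestronglyMeasurable (ae_of_all _ ?_)
  intro lam
  unfold ff
  have h1 : |e| ≤ 1 + |e| := by linarith [abs_nonneg e]
  split_ifs <;> simp [abs_mul] <;> linarith [abs_nonneg e]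

lemma ff_integral (b e : ℝ) (hb : |b| ≤ 1) :
    ∫ lam in Set.Icc (-(1/2):ℝ) (1/2), ff b e lam = b := by
  have hIco : MeasurableSet (Set.Ico (-(1/2):ℝ) 0) := measurableSet_Ico
  by_cases hb0 : b = 0
  · subst hb0
    have hsplit : Set.Icc (-(1/2):ℝ) (1/2) = Set.Ico (-(1/2):ℝ) 0 ∪ Set.Icc (0:ℝ) (1/2) := by
      ext x
      simp only [Set.mem_Icc, Set.mem_Ico, Set.mem_union]
      constructor
      · rintro ⟨h1, h2⟩
        rcases lt_or_ge x 0 with h | h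
        · exact Or.inl ⟨h1, h⟩
        · exact Or.inr ⟨h, h2⟩
      · rintro (⟨h1, h2⟩ | ⟨h1, h2⟩) <;> constructor <;> linarith
    have hdisj : Disjoint (Set.Ico (-(1/2):ℝ) 0) (Set.Icc (0:ℝ) (1/2)) := by
      rw [Set.disjoint_left]
      rintro x ⟨-, h1⟩ ⟨h2, -⟩
      linarith
    rw [hsplit, setIntegral_union hdisj measurableSet_Icc
      (ff_integrableOn _ _ _ hIco (by rw [Real.volume_Ico]; exact ENNReal.ofReal_lt_top))
      (ff_integrableOn _ _ _ measurableSet_Icc (by rw [Real.volume_Icc]; exact ENNReal.ofReal_lt_top))]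
    have h1 : ∫ lam in Set.Ico (-(1/2):ℝ) 0, ff 0 e lam = ∫ _ in Set.Ico (-(1/2):ℝ) 0, (-e : ℝ) := by
      apply setIntegral_congr_fun hIco
      intro x hx
      unfold ff
      rw [if_neg (by simp [abs_nonneg]), if_neg (not_le.mpr hx.2)]
      ring
    have h2 : ∫ lam in Set.Icc (0:ℝ) (1/2), ff 0 e lam = ∫ _ in Set.Icc (0:ℝ) (1/2), (e : ℝ) := by
      apply setIntegral_congr_fun measurableSet_Icc
      intro x hx
      unfold ff
      rw [if_neg (by simp [abs_nonneg]), if_pos hx.1]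
      ring
    rw [h1, h2, setIntegral_const, setIntegral_const, Real.volume_real_Ico_of_le (by norm_num),
      Real.volume_real_Icc_of_le (by norm_num)]
    simp only [smul_eq_mul]
    norm_num
  · -- b ≠ 0
    set d : ℝ := |b| / 2 with hd
    set S : ℝ := if 0 < b then 1 else -1 with hS
    have hd0 : 0 < d := by
      rw [hd]
      have := abs_pos.mpr hb0
      linarith
    have hd2 : d ≤ 1/2 := by rw [hd]; linarith
    have hs1 : MeasurableSet (Set.Icc (-(1/2):ℝ) (-d)) := measurableSet_Icc
    have hs2 : MeasurableSet (Set.Ioo (-d) d) := measurableSet_Ioo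
    have hs3 : MeasurableSet (Set.Icc d (1/2:ℝ)) := measurableSet_Icc
    have hsplit : Set.Icc (-(1/2):ℝ) (1/2)
        = (Set.Icc (-(1/2):ℝ) (-d) ∪ Set.Ioo (-d) d) ∪ Set.Icc d (1/2:ℝ) := by
      ext x
      simp only [Set.mem_Icc, Set.mem_Ioo, Set.mem_union]
      constructor
      · rintro ⟨h1, h2⟩
        rcases le_or_gt x (-d) with h | h
        · exact Or.inl (Or.inl ⟨h1, h⟩)
        · rcases lt_or_ge x d with h' | h'
          · exact Or.inl (Or.inr ⟨h, h'⟩)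
          · exact Or.inr ⟨h', h2⟩
      · rintro ((⟨h1, h2⟩ | ⟨h1, h2⟩) | ⟨h1, h2⟩) <;> constructor <;> linarith
    have hdisj12 : Disjoint (Set.Icc (-(1/2):ℝ) (-d)) (Set.Ioo (-d) d) := by
      rw [Set.disjoint_left]
      rintro x ⟨-, h1⟩ ⟨h2, -⟩
      linarith
    have hdisj3 : Disjoint (Set.Icc (-(1/2):ℝ) (-d) ∪ Set.Ioo (-d) d) (Set.Icc d (1/2:ℝ)) := by
      rw [Set.disjoint_left]
      rintro x (⟨-, h1⟩ | ⟨-, h1⟩) ⟨h2, -⟩ <;> linarith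
    have hint : ∀ t : Set ℝ, MeasurableSet t → volume t < ⊤ → IntegrableOn (ff b e) t volume :=
      fun t ht hv => ff_integrableOn b e t ht hv
    have hv1 : volume (Set.Icc (-(1/2):ℝ) (-d)) < ⊤ := by
      rw [Real.volume_Icc]; exact ENNReal.ofReal_lt_top
    have hv2 : volume (Set.Ioo (-d:ℝ) d) < ⊤ := by
      rw [Real.volume_Ioo]; exact ENNReal.ofReal_lt_top
    have hv3 : volume (Set.Icc (d:ℝ) (1/2)) < ⊤ := by
      rw [Real.volume_Icc]; exact ENNReal.ofReal_lt_top
    rw [hsplit, setIntegral_union hdisj3 hs3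
      ((hint _ hs1 hv1).union (hint _ hs2 hv2)) (hint _ hs3 hv3),
      setIntegral_union hdisj12 hs2 (hint _ hs1 hv1) (hint _ hs2 hv2)]
    have h1 : ∫ lam in Set.Icc (-(1/2):ℝ) (-d), ff b e lam
        = ∫ _ in Set.Icc (-(1/2):ℝ) (-d), (-e : ℝ) := by
      apply setIntegral_congr_fun hs1
      rintro x ⟨-, hx2⟩
      unfold ff
      rw [if_neg (by rw [not_lt, ← hd]; rw [_root_.abs_of_nonpos (by linarith : x ≤ 0)]; linarith),
        if_neg (by push_neg; linarith)]
      ring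
    have h2 : ∫ lam in Set.Ioo (-d:ℝ) d, ff b e lam = ∫ _ in Set.Ioo (-d:ℝ) d, S := by
      apply setIntegral_congr_fun hs2
      rintro x ⟨hx1, hx2⟩
      unfold ff
      rw [if_pos (by rw [← hd]; exact abs_lt.mpr ⟨hx1, hx2⟩), ← hS]
    have h3 : ∫ lam in Set.Icc (d:ℝ) (1/2), ff b e lam
        = ∫ _ in Set.Icc (d:ℝ) (1/2), (e : ℝ) := by
      apply setIntegral_congr_fun hs3
      rintro x ⟨hx1, -⟩
      unfold ff
      rw [if_neg (by rw [not_lt, ← hd, _root_.abs_of_nonneg (by linarith : (0:ℝ) ≤ x)]; linarith),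
        if_pos (by linarith)]
      ring
    rw [h1, h2, h3, setIntegral_const, setIntegral_const, setIntegral_const,
      Real.volume_real_Icc_of_le (by linarith), Real.volume_real_Ioo_of_le (by linarith),
      Real.volume_real_Icc_of_le (by linarith)]
    simp only [smul_eq_mul]
    rcases lt_trichotomy b 0 with hbneg | h | hbpos
    · rw [hS, if_neg (by linarith), hd, abs_of_neg hbneg]; ring
    · exact absurd h hb0
    · rw [hS, if_pos hbpos, hd, abs_of_pos hbpos]; ring


lemma rb_eq (ψ : Fin 2 → ℂ) (A : Matrix (Fin 2) (Fin 2) ℂ) :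
    rr A * bloch ψ (dirA A) = pB ψ * uc A + 2 * (cc A * qB ψ).re := by
  by_cases hr : rr A = 0
  · obtain ⟨hu, hc⟩ := rr_eq_zero hr
    unfold bloch dirA
    rw [hu, hc, hr]
    simp
  · unfold bloch dirA
    have hdiv : (cc A / (rr A : ℂ) * qB ψ).re = (cc A * qB ψ).re / rr A := by
      rw [div_mul_eq_mul_div, Complex.div_ofReal_re]
    rw [hdiv]
    field_simp

lemma bloch_le_one {ψ : Fin 2 → ℂ} (hψ : normSq (ψ 0) + normSq (ψ 1) = 1)
    (A : Matrix (Fin 2) (Fin 2) ℂ) : |bloch ψ (dirA A)| ≤ 1 := by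
  by_cases hr : rr A = 0
  · obtain ⟨hu, hc⟩ := rr_eq_zero hr
    unfold bloch dirA
    rw [hu, hc, hr]
    simp
  · have hr0 : 0 < rr A := lt_of_le_of_ne (rr_nonneg A) (Ne.symm hr)
    have hq : normSq (qB ψ) = normSq (ψ 0) * normSq (ψ 1) := by
      unfold qB; rw [normSq_mul, normSq_conj]
    have hpq : pB ψ ^ 2 + 4 * normSq (qB ψ) = 1 := by
      unfold pB
      rw [hq]
      nlinarith [hψ]
    have hw : (cc A * qB ψ).re = (cc A).re * (qB ψ).re - (cc A).im * (qB ψ).im :=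
      Complex.mul_re _ _
    have hnc : normSq (cc A) = (cc A).re ^ 2 + (cc A).im ^ 2 := by
      rw [normSq_apply]; ring
    have hnq : normSq (qB ψ) = (qB ψ).re ^ 2 + (qB ψ).im ^ 2 := by
      rw [normSq_apply]; ring
    have key : (rr A * bloch ψ (dirA A)) ^ 2 ≤ rr A ^ 2 := by
      rw [rb_eq, rr_sq]
      rw [hw, hnc]
      nlinarith [sq_nonneg (pB ψ * (cc A).re - 2 * (qB ψ).re * uc A),
        sq_nonneg (pB ψ * (cc A).im + 2 * (qB ψ).im * uc A),
        sq_nonneg ((qB ψ).re * (cc A).im + (qB ψ).im * (cc A).re), hpq, hnq,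
        sq_nonneg (uc A), sq_nonneg (pB ψ)]
    have hb2 : bloch ψ (dirA A) ^ 2 ≤ 1 := by
      nlinarith [key, mul_pos hr0 hr0]
    rw [abs_le]
    constructor <;> nlinarith [hb2]

lemma expectation {A : Matrix (Fin 2) (Fin 2) ℂ} (hA : A.IsHermitian) (ψ : Fin 2 → ℂ)
    (hψ : star ψ ⬝ᵥ ψ = 1) :
    star ψ ⬝ᵥ (A *ᵥ ψ) = ((tc A + (pB ψ * uc A + 2 * (cc A * qB ψ).re) : ℝ) : ℂ) := by
  have hψ' : (starRingEnd ℂ) (ψ 0) * ψ 0 + (starRingEnd ℂ) (ψ 1) * ψ 1 = 1 := by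
    simpa [dotProduct, Fin.sum_univ_two] using hψ
  have h0 : (starRingEnd ℂ) (ψ 0) * ψ 0 = (normSq (ψ 0) : ℂ) := by rw [mul_comm, mul_conj]
  have h1 : (starRingEnd ℂ) (ψ 1) * ψ 1 = (normSq (ψ 1) : ℂ) := by rw [mul_comm, mul_conj]
  have h2 : cc A * qB ψ + (starRingEnd ℂ) (cc A * qB ψ)
      = 2 * (((cc A * qB ψ).re : ℝ) : ℂ) := by
    rw [Complex.add_conj]
    push_cast
    ring
  have hq : cc A * (starRingEnd ℂ) (ψ 0) * ψ 1 = cc A * qB ψ := by unfold qB; ring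
  have hconj : (starRingEnd ℂ) (cc A) * (starRingEnd ℂ) (ψ 1) * ψ 0
      = (starRingEnd ℂ) (cc A * qB ψ) := by
    unfold qB
    rw [_root_.map_mul (starRingEnd ℂ) (cc A), _root_.map_mul (starRingEnd ℂ), Complex.conj_conj]
    ring
  have hAv : A *ᵥ ψ = (tc A : ℂ) • ψ + Mm (uc A) (cc A) *ᵥ ψ := by
    conv_lhs => rw [herm_decomp hA]
    rw [Matrix.add_mulVec, Matrix.smul_mulVec, Matrix.one_mulVec]
  rw [hAv]
  simp only [dotProduct, Pi.add_apply, Pi.smul_apply, smul_eq_mul, Fin.sum_univ_two,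
    Pi.star_apply, RCLike.star_def, Matrix.mulVec, Mm, Matrix.of_apply, Matrix.cons_val',
    Matrix.cons_val_zero, Matrix.cons_val_one, Matrix.head_cons, Matrix.empty_val',
    Matrix.cons_val_fin_one, Matrix.head_fin_const]
  unfold pB
  push_cast
  linear_combination (tc A : ℂ) * hψ' + (uc A : ℂ) * h0 - (uc A : ℂ) * h1 + hq + hconj + h2


lemma val_integral {A : Matrix (Fin 2) (Fin 2) ℂ} (ψ : Fin 2 → ℂ)
    (hψn : normSq (ψ 0) + normSq (ψ 1) = 1) :
    ∫ lam in Set.Icc (-(1/2):ℝ) (1/2), Val ψ lam A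
      = tc A + (pB ψ * uc A + 2 * (cc A * qB ψ).re) := by
  haveI hfin : IsFiniteMeasure (volume.restrict (Set.Icc (-(1/2):ℝ) (1/2))) := by
    constructor
    rw [Measure.restrict_apply_univ, Real.volume_Icc]
    exact ENNReal.ofReal_lt_top
  have hb := bloch_le_one hψn A
  have hInt : IntegrableOn (ff (bloch ψ (dirA A)) (eps (dirA A))) (Set.Icc (-(1/2):ℝ) (1/2))
      volume :=
    ff_integrableOn _ _ _ measurableSet_Icc (by rw [Real.volume_Icc]; exact ENNReal.ofReal_lt_top)
  have hVal : (fun lam => Val ψ lam A)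
      = fun lam => tc A + rr A * ff (bloch ψ (dirA A)) (eps (dirA A)) lam := by
    funext lam
    unfold Val
    rw [sg_eq_ff]
  rw [hVal, integral_add (integrable_const _) (hInt.const_mul (rr A)),
    integral_const, integral_const_mul, ff_integral _ _ hb, rb_eq]
  rw [measureReal_restrict_apply_univ, Real.volume_real_Icc_of_le (by norm_num)]
  norm_num

end Bell

end

/-- Bell's theorem: there exists a value representation for quantum systems
described by the two-dimensional complex Hilbert space. -/
theorem exists_value_representation_dim_two :
    ∃ (Λ : Type) (_ : MeasurableSpace Λ) (P : Measure Λ) (_ : IsProbabilityMeasure P)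
      (V : {ψ : Fin 2 → ℂ // star ψ ⬝ᵥ ψ = 1} → Λ → Matrix (Fin 2) (Fin 2) ℂ → ℝ),
      (∀ ψ lam, IsQubitValuation (V ψ lam)) ∧
      (∀ (ψ : {ψ : Fin 2 → ℂ // star ψ ⬝ᵥ ψ = 1}) (A : Matrix (Fin 2) (Fin 2) ℂ),
        A.IsHermitian →
        ((∫ lam, V ψ lam A ∂P : ℝ) : ℂ) = star (ψ : Fin 2 → ℂ) ⬝ᵥ (A *ᵥ (ψ : Fin 2 → ℂ))) := by
  refine ⟨ℝ, inferInstance, volume.restrict (Set.Icc (-(1/2):ℝ) (1/2)), ⟨?_⟩,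
    fun ψ lam A => Bell.Val ψ.1 lam A, fun ψ lam => Bell.isValuation ψ.1 lam, ?_⟩
  · rw [Measure.restrict_apply_univ, Real.volume_Icc]
    norm_num
  · intro ψ A hA
    have hψn : Complex.normSq (ψ.1 0) + Complex.normSq (ψ.1 1) = 1 := by
      have h : (starRingEnd ℂ) (ψ.1 0) * ψ.1 0 + (starRingEnd ℂ) (ψ.1 1) * ψ.1 1 = 1 := by
        simpa [dotProduct, Fin.sum_univ_two] using ψ.2
      rw [mul_comm ((starRingEnd ℂ) (ψ.1 0)), mul_comm ((starRingEnd ℂ) (ψ.1 1)),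
        Complex.mul_conj, Complex.mul_conj] at h
      exact_mod_cast h
    rw [Bell.expectation hA ψ.1 ψ.2]
    norm_cast
    exact Bell.val_integral ψ.1 hψn
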